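/- Let M be a compact set of entrywise nonnegative r×r matrices, each having 1 as a simple eigenvalue with (unique up to scaling) eigenvector the all-ones vector 1, this being the Perron–Frobenius eigenvalue. Then there is a constant c > 0 such that for every M ∈ M and every v ∈ ℝ^r with Σ_s v_s = 0, the positive part of (M − I)v satisfies ‖((M − I)v)₊‖₁ ≥ c ‖v‖₁, and likewise for the negative part. -/

import Mathlib

open scoped BigOperators

lemma aux_zero {r : ℕ} (u w : Fin r → ℝ) (hu : ∀ s, 0 < u s)
    (hsum : ∑ s, u s * w s = 0) (hle : ∀ s, w s ≤ 0) : ∀ s, w s = 0 := by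
  have h0 : ∀ s ∈ Finset.univ, u s * w s = 0 := by
    apply (Finset.sum_eq_zero_iff_of_nonpos ?_).mp hsum
    intro s _
    exact mul_nonpos_of_nonneg_of_nonpos (hu s).le (hle s)
  intro s
  have := h0 s (Finset.mem_univ s)
  rcases mul_eq_zero.mp this with h | h
  · exact absurd h (hu s).ne'
  · exact h

lemma aux_pos {r : ℕ} (M : Matrix (Fin r) (Fin r) ℝ) (v : Fin r → ℝ)
    (hsimple : ∀ w : Fin r → ℝ, M.mulVec w = w → ∃ t : ℝ, w = fun _ => t)
    (u : Fin r → ℝ) (hu : ∀ s, 0 < u s) (huM : Matrix.vecMul u M = u)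
    (hsum : ∑ s, v s = 0) (hnorm : ∑ s, |v s| = 1) :
    0 < ∑ s, max (M.mulVec v s - v s) 0 ∧
    0 < ∑ s, max (-(M.mulVec v s - v s)) 0 := by
  have hne : M.mulVec v ≠ v := by
    intro h
    obtain ⟨t, ht⟩ := hsimple v h
    have h1 : (r : ℝ) * t = 0 := by
      rw [← hsum, ht]; simp [mul_comm]
    have h2 : ∑ s, |v s| = (r : ℝ) * |t| := by
      rw [ht]; simp [mul_comm]
    have : (r : ℝ) * |t| = 0 := by
      rcases mul_eq_zero.mp h1 with h | h
      · rw [h, zero_mul]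
      · rw [h, abs_zero, mul_zero]
    rw [hnorm] at h2
    exact one_ne_zero (h2.trans this)
  have hdot : ∑ s, u s * (M.mulVec v s - v s) = 0 := by
    have h1 : dotProduct u (M.mulVec v) = dotProduct u v := by
      rw [Matrix.dotProduct_mulVec, huM]
    simp only [mul_sub, Finset.sum_sub_distrib]
    simpa [dotProduct] using sub_eq_zero_of_eq h1
  constructor
  · by_contra h
    push_neg at h
    have h0 : ∑ s, max (M.mulVec v s - v s) 0 = 0 := by
      have : 0 ≤ ∑ s, max (M.mulVec v s - v s) 0 :=
        Finset.sum_nonneg fun s _ => le_max_right _ _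
      linarith
    have hall : ∀ s ∈ Finset.univ, max (M.mulVec v s - v s) 0 = 0 :=
      (Finset.sum_eq_zero_iff_of_nonneg (fun s _ => le_max_right _ _)).mp h0
    have hle : ∀ s, M.mulVec v s - v s ≤ 0 := by
      intro s
      have := hall s (Finset.mem_univ s)
      by_contra hc
      push_neg at hc
      rw [max_eq_left hc.le] at this
      exact hc.ne' this
    have := aux_zero u _ hu hdot hle
    exact hne (funext fun s => by linarith [this s])
  · by_contra h
    push_neg at h
    have h0 : ∑ s, max (-(M.mulVec v s - v s)) 0 = 0 := by
      have : 0 ≤ ∑ s, max (-(M.mulVec v s - v s)) 0 :=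
        Finset.sum_nonneg fun s _ => le_max_right _ _
      linarith
    have hall : ∀ s ∈ Finset.univ, max (-(M.mulVec v s - v s)) 0 = 0 :=
      (Finset.sum_eq_zero_iff_of_nonneg (fun s _ => le_max_right _ _)).mp h0
    have hle : ∀ s, -(M.mulVec v s - v s) ≤ 0 := by
      intro s
      have := hall s (Finset.mem_univ s)
      by_contra hc
      push_neg at hc
      rw [max_eq_left hc.le] at this
      exact hc.ne' this
    have hdot' : ∑ s, u s * (-(M.mulVec v s - v s)) = 0 := by
      simp only [mul_neg]
      rw [Finset.sum_neg_distrib, hdot, neg_zero]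
    have := aux_zero u _ hu hdot' hle
    exact hne (funext fun s => by linarith [this s])

/-- Lemma: let `𝓜` be a compact set of entrywise nonnegative row-stochastic `r × r`
matrices, each having `1` as a simple Perron–Frobenius eigenvalue with right eigenvector
the all-ones vector (one-dimensional eigenspace) and a strictly positive left
eigenvector.  Then there is `c > 0` such that for every `M ∈ 𝓜` and every `v` with
`Σ_s v_s = 0`, both the positive and the negative part of `(M − I) v` have `ℓ¹`-norm at
least `c ‖v‖₁`. -/
theorem stmt_10 (r : ℕ) (𝓜 : Set (Matrix (Fin r) (Fin r) ℝ))
    (hcomp : IsCompact 𝓜)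
    (hpos : ∀ M ∈ 𝓜, ∀ i j, 0 ≤ M i j)
    (hstoch : ∀ M ∈ 𝓜, M.mulVec (fun _ => 1) = fun _ => 1)
    (hsimple : ∀ M ∈ 𝓜, ∀ w : Fin r → ℝ, M.mulVec w = w → ∃ t : ℝ, w = fun _ => t)
    (hleft : ∀ M ∈ 𝓜, ∃ u : Fin r → ℝ, (∀ s, 0 < u s) ∧ Matrix.vecMul u M = u) :
    ∃ c : ℝ, 0 < c ∧ ∀ M ∈ 𝓜, ∀ v : Fin r → ℝ, (∑ s, v s = 0) →
      c * ∑ s, |v s| ≤ ∑ s, max (M.mulVec v s - v s) 0 ∧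
      c * ∑ s, |v s| ≤ ∑ s, max (-(M.mulVec v s - v s)) 0 := by
  classical
  set V : Set (Fin r → ℝ) := {v | ∑ s, v s = 0 ∧ ∑ s, |v s| = 1} with hV
  set S : Set (Matrix (Fin r) (Fin r) ℝ × (Fin r → ℝ)) := 𝓜 ×ˢ V with hS
  set g : Matrix (Fin r) (Fin r) ℝ × (Fin r → ℝ) → ℝ :=
    fun p => min (∑ s, max (p.1.mulVec p.2 s - p.2 s) 0)
               (∑ s, max (-(p.1.mulVec p.2 s - p.2 s)) 0) with hgdef
  have hgcont : Continuous g := by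
    apply Continuous.min
    · apply continuous_finset_sum
      intro s _
      apply Continuous.max _ continuous_const
      apply Continuous.sub _ ((continuous_apply s).comp continuous_snd)
      show Continuous fun p : Matrix (Fin r) (Fin r) ℝ × (Fin r → ℝ) =>
        ∑ j, p.1 s j * p.2 j
      apply continuous_finset_sum
      intro j _
      exact (((continuous_apply j).comp ((continuous_apply s).comp continuous_fst)).mul
        ((continuous_apply j).comp continuous_snd))
    · apply continuous_finset_sum
      intro s _
      apply Continuous.max _ continuous_const
      apply Continuous.neg
      apply Continuous.sub _ ((continuous_apply s).comp continuous_snd)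
      show Continuous fun p : Matrix (Fin r) (Fin r) ℝ × (Fin r → ℝ) =>
        ∑ j, p.1 s j * p.2 j
      apply continuous_finset_sum
      intro j _
      exact (((continuous_apply j).comp ((continuous_apply s).comp continuous_fst)).mul
        ((continuous_apply j).comp continuous_snd))
  have hgposS : ∀ p ∈ S, 0 < g p := by
    rintro ⟨M, v⟩ ⟨hM, hv1, hv2⟩
    obtain ⟨u, hu, huM⟩ := hleft M hM
    obtain ⟨h1, h2⟩ := aux_pos M v (hsimple M hM) u hu huM hv1 hv2
    exact lt_min h1 h2
  have hVcomp : IsCompact V := by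
    apply IsCompact.of_isClosed_subset (isCompact_closedBall (0 : Fin r → ℝ) 1)
    · exact (isClosed_eq (by fun_prop) continuous_const).inter
        (isClosed_eq (by fun_prop) continuous_const)
    · rintro v ⟨_, hv2⟩
      rw [Metric.mem_closedBall, dist_zero_right]
      rw [pi_norm_le_iff_of_nonneg (by norm_num)]
      intro i
      rw [Real.norm_eq_abs, ← hv2]
      exact Finset.single_le_sum (fun s _ => abs_nonneg (v s)) (Finset.mem_univ i)
  have hScomp : IsCompact S := hcomp.prod hVcomp
  -- the trivial degenerate case handler
  have hdeg : ∀ M ∈ 𝓜, ∀ v : Fin r → ℝ, ∑ s, |v s| = 0 → ∀ c : ℝ,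
      c * ∑ s, |v s| ≤ ∑ s, max (M.mulVec v s - v s) 0 ∧
      c * ∑ s, |v s| ≤ ∑ s, max (-(M.mulVec v s - v s)) 0 := by
    intro M _ v hv c
    rw [hv, mul_zero]
    exact ⟨Finset.sum_nonneg fun s _ => le_max_right _ _,
      Finset.sum_nonneg fun s _ => le_max_right _ _⟩
  rcases S.eq_empty_or_nonempty with hSe | hSne
  · refine ⟨1, one_pos, fun M hM v hvsum => ?_⟩
    have hv0 : ∑ s, |v s| = 0 := by
      by_contra hne
      have ha : 0 < ∑ s, |v s| :=
        lt_of_le_of_ne (Finset.sum_nonneg fun s _ => abs_nonneg _) (Ne.symm hne)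
      have : (M, (∑ s, |v s|)⁻¹ • v) ∈ S := by
        refine ⟨hM, ?_, ?_⟩
        · simp [← Finset.mul_sum, hvsum]
        · simp only [Pi.smul_apply, smul_eq_mul, abs_mul, abs_inv, abs_of_pos ha,
            ← Finset.mul_sum]
          exact inv_mul_cancel₀ ha.ne'
      rw [hSe] at this
      exact this
    exact hdeg M hM v hv0 1
  · obtain ⟨p₀, hp₀S, hp₀min⟩ := hScomp.exists_isMinOn hSne hgcont.continuousOn
    refine ⟨g p₀, hgposS p₀ hp₀S, fun M hM v hvsum => ?_⟩
    set a : ℝ := ∑ s, |v s| with ha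
    rcases eq_or_lt_of_le (Finset.sum_nonneg fun s _ => abs_nonneg (v s)) with h0 | hapos
    · exact hdeg M hM v h0.symm (g p₀)
    · set v' : Fin r → ℝ := a⁻¹ • v with hv'
      have hmem : (M, v') ∈ S := by
        refine ⟨hM, ?_, ?_⟩
        · simp [hv', ← Finset.mul_sum, hvsum]
        · simp only [hv', Pi.smul_apply, smul_eq_mul, abs_mul, abs_inv, abs_of_pos hapos,
            ← Finset.mul_sum]
          rw [abs_of_pos (show 0 < a from hapos)]
          exact inv_mul_cancel₀ hapos.ne'
      have hmin := hp₀min hmem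
      have hmv : M.mulVec v' = a⁻¹ • M.mulVec v := by
        rw [hv', Matrix.mulVec_smul]
      have hterm : ∀ s, M.mulVec v' s - v' s = a⁻¹ * (M.mulVec v s - v s) := by
        intro s
        rw [hmv, hv']
        simp [mul_sub]
      have hsum1 : ∑ s, max (M.mulVec v' s - v' s) 0
          = a⁻¹ * ∑ s, max (M.mulVec v s - v s) 0 := by
        rw [Finset.mul_sum]
        apply Finset.sum_congr rfl
        intro s _
        rw [hterm s, mul_max_of_nonneg _ _ (inv_nonneg.mpr hapos.le), mul_zero]
      have hsum2 : ∑ s, max (-(M.mulVec v' s - v' s)) 0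
          = a⁻¹ * ∑ s, max (-(M.mulVec v s - v s)) 0 := by
        rw [Finset.mul_sum]
        apply Finset.sum_congr rfl
        intro s _
        rw [hterm s, ← mul_neg, mul_max_of_nonneg _ _ (inv_nonneg.mpr hapos.le), mul_zero]
      have hle1 : g p₀ ≤ a⁻¹ * ∑ s, max (M.mulVec v s - v s) 0 := by
        calc g p₀ ≤ g (M, v') := hmin
        _ ≤ ∑ s, max ((M, v').1.mulVec (M, v').2 s - (M, v').2 s) 0 := min_le_left _ _
        _ = a⁻¹ * ∑ s, max (M.mulVec v s - v s) 0 := hsum1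
      have hle2 : g p₀ ≤ a⁻¹ * ∑ s, max (-(M.mulVec v s - v s)) 0 := by
        calc g p₀ ≤ g (M, v') := hmin
        _ ≤ ∑ s, max (-((M, v').1.mulVec (M, v').2 s - (M, v').2 s)) 0 := min_le_right _ _
        _ = a⁻¹ * ∑ s, max (-(M.mulVec v s - v s)) 0 := hsum2
      constructor
      · calc g p₀ * a ≤ (a⁻¹ * ∑ s, max (M.mulVec v s - v s) 0) * a :=
              mul_le_mul_of_nonneg_right hle1 hapos.le
        _ = ∑ s, max (M.mulVec v s - v s) 0 := by
              field_simp
              exact mul_div_cancel_left₀ _ (show a ≠ 0 from hapos.ne')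
      · calc g p₀ * a ≤ (a⁻¹ * ∑ s, max (-(M.mulVec v s - v s)) 0) * a :=
              mul_le_mul_of_nonneg_right hle2 hapos.le
        _ = ∑ s, max (-(M.mulVec v s - v s)) 0 := by
              field_simp
              exact mul_div_cancel_left₀ _ (show a ≠ 0 from hapos.ne')
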